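/- arXiv:math/0610719 — 2 statements merged into one kernel-verified Lean document; each statement's English description precedes it below -/
import Mathlib

section
/- Let n be a positive integer, u a column of length n−k with u_1 ≤ n, and let ũ = [ũ_1,…,ũ_k] be the increasing complement of u in {1,…,n}. Set p(u,n) := [ũ_1−1, ũ_2−2, …, ũ_k−k]. Then the map v ↦ p(v,n) is a bijection between the set of columns v of length n−k+1 with v_1 ≤ n such that the two-column array (v,u) is a staircase, and the set of weakly increasing μ ∈ ℕ^{k−1} such that (p(u,n)+1^k)/μ is a ribbon (μ being padded with an initial 0 part). -/
open scoped BigOperators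

/-! ### Polynomial ring in two families of variables `x₁, x₂, …` and `y₁, y₂, …`.

`Rpoly` is the ring of polynomials with integer coefficients in the variables
`xP i` (the `x`-variables, indexed by `Sum.inl`) and `yP j` (the `y`-variables,
indexed by `Sum.inr`).  Throughout, variables are indexed starting from `1`. -/

abbrev Rpoly : Type := MvPolynomial (ℕ ⊕ ℕ) ℤ

noncomputable def xP (i : ℕ) : Rpoly := MvPolynomial.X (Sum.inl i)
noncomputable def yP (i : ℕ) : Rpoly := MvPolynomial.X (Sum.inr i)

/-! ### Divided differences on `Rpoly`.

`ddP i` is the Newton divided difference `∂ᵢ : f ↦ (f - fˢⁱ)/(xᵢ - xᵢ₊₁)`,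
implemented by its (exact) action on monomials:
`∂ᵢ (xᵢ^a xᵢ₊₁^b) = Σ_{j=b}^{a-1} xᵢ^j xᵢ₊₁^{a+b-1-j}` for `a ≥ b`,
and the antisymmetric counterpart when `a < b`. -/

noncomputable def ddMon (i : ℕ) (m : (ℕ ⊕ ℕ) →₀ ℕ) : Rpoly :=
  let a := m (Sum.inl i)
  let b := m (Sum.inl (i + 1))
  if b ≤ a then
    ∑ j ∈ Finset.Ico b a,
      MvPolynomial.monomial
        (Finsupp.update (Finsupp.update m (Sum.inl i) j) (Sum.inl (i + 1)) (a + b - 1 - j)) 1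
  else
    - ∑ j ∈ Finset.Ico a b,
      MvPolynomial.monomial
        (Finsupp.update (Finsupp.update m (Sum.inl i) j) (Sum.inl (i + 1)) (a + b - 1 - j)) 1

noncomputable def ddP (i : ℕ) (f : Rpoly) : Rpoly :=
  ∑ m ∈ f.support, MvPolynomial.coeff m f • ddMon i m

/-- `∂_σ` along a word `[i₁, …, i_N]` is `∂_{i₁} ∘ ⋯ ∘ ∂_{i_N}`. -/
noncomputable def ddWord (w : List ℕ) (f : Rpoly) : Rpoly := w.foldr ddP f

/-! ### Schubert polynomials, indexed by a permutation given as a list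
`[σ 1, …, σ n]` of the values of a permutation of `{1, …, n}`. -/

/-- The code of a permutation list: `c i = #{j > i : σ_j < σ_i}` (positions 0-based). -/
def codeOf (l : List ℕ) (i : ℕ) : ℕ :=
  ((l.drop (i + 1)).filter (fun a => a < l.getD i 0)).length

/-- The dominant Schubert polynomial `Y_v = Π_i Π_{j=1}^{v_i} (x_i - y_j)`
attached to an exponent list `v`. -/
noncomputable def YDomP (v : List ℕ) : Rpoly :=
  ∏ i ∈ Finset.range v.length, ∏ j ∈ Finset.range (v.getD i 0), (xP (i + 1) - yP (j + 1))

/-- The dominant polynomial attached to a (dominant) permutation list via its code. -/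
noncomputable def domP (l : List ℕ) : Rpoly :=
  YDomP ((List.range l.length).map (codeOf l))

/-- First ascent position (0-based) of a list. -/
def firstAscent (l : List ℕ) : Option ℕ :=
  (List.range (l.length - 1)).find? (fun i => l.getD i 0 < l.getD (i + 1) 0)

/-- First descent position (0-based) of a list. -/
def firstDescent (l : List ℕ) : Option ℕ :=
  (List.range (l.length - 1)).find? (fun i => l.getD (i + 1) 0 < l.getD i 0)

/-- Exchange the entries at positions `i`, `i+1` of a list. -/
def swapPos (l : List ℕ) (i : ℕ) : List ℕ :=
  (l.set i (l.getD (i + 1) 0)).set (i + 1) (l.getD i 0)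

/-- Schubert polynomials via the recursion `X_σ = ∂_i X_{σ sᵢ}` whenever
`σ_i < σ_{i+1}` (so that lengths add), starting from the dominant case; the
first argument is a fuel parameter. -/
noncomputable def SchubAux : ℕ → List ℕ → Rpoly
  | 0, l => domP l
  | fuel + 1, l =>
    match firstAscent l with
    | none => domP l
    | some i => ddP (i + 1) (SchubAux fuel (swapPos l i))

/-- The Schubert polynomial `X_σ(x, y)` of a permutation list `σ = [σ 1, …, σ n]`. -/
noncomputable def SchubP (l : List ℕ) : Rpoly := SchubAux (l.length * l.length) l

/-- A reduced word for the permutation given by a list, obtained by repeatedly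
exchanging the first descent: if `i` is a descent of `σ` then
`word σ = word (σ sᵢ) ++ [i]`. -/
def sortWord : ℕ → List ℕ → List ℕ
  | 0, _ => []
  | fuel + 1, l =>
    match firstDescent l with
    | none => []
    | some i => sortWord fuel (swapPos l i) ++ [i + 1]

/-- The standard reduced word `s₁ (s₂ s₁) (s₃ s₂ s₁) ⋯ (s_{r-1} ⋯ s₁)` of the
longest element `ω_r` of the symmetric group `S_r`. -/
def omegaWord (r : ℕ) : List ℕ :=
  (List.range (r - 1)).flatMap (fun k => (List.range (k + 1)).map (fun j => k + 1 - j))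

/-- For weakly increasing `ν ∈ ℕ^r`, the partition `λ = (ν_r + r - 1, …, ν_1)`. -/
def lamOf (ν : List ℕ) : List ℕ :=
  ν.reverse.mapIdx (fun i a => a + (ν.length - 1 - i))

/-- For a weakly increasing `ν ∈ ℕ^r`, the (Graßmannian) Schubert polynomial
`Y_ν := ∂_{ω_r} Y_λ` with `λ = (ν_r + r - 1, …, ν_1)`. -/
noncomputable def YGr (ν : List ℕ) : Rpoly := ddWord (omegaWord ν.length) (YDomP (lamOf ν))

/-- Evaluation of a polynomial of `Rpoly` at points `x i`, `y j` of a commutative ring. -/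
noncomputable def evalP {K : Type*} [CommRing K] (x y : ℕ → K) (f : Rpoly) : K :=
  MvPolynomial.aeval (Sum.elim x y) f

/-! ### Columns, staircases and their partition functions. -/

/-- A column: a strictly decreasing list of positive integers. -/
def IsCol (u : List ℕ) : Prop := u.Chain' (· > ·) ∧ ∀ a ∈ u, 0 < a

/-- Rows weakly increase: reading rows from the bottom (columns are bottom-aligned),
the left neighbour of the entry of `next` at 0-based position `p` (from the top)
is the entry of `prev` at position `p+1`. -/
def RowCond (prev next : List ℕ) : Prop :=
  ∀ p, p < next.length → prev.getD (p + 1) 0 ≤ next.getD p 0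

/-- Diagonals weakly decrease: the up-left neighbour of the entry of `next` at
0-based position `p` is the entry of `prev` at position `p`. -/
def DiagCond (prev next : List ℕ) : Prop :=
  ∀ p, p < next.length → next.getD p 0 ≤ prev.getD p 0

/-- A staircase: a nonempty sequence of columns of lengths `k, k-1, …, k-r`,
with weakly increasing rows and weakly decreasing diagonals. -/
def IsStaircase (t : List (List ℕ)) : Prop :=
  t ≠ [] ∧
  (∀ i, i < t.length → (t.getD i []).length + i = (t.getD 0 []).length) ∧
  (∀ c ∈ t, IsCol c) ∧
  (∀ i, i + 1 < t.length →
    RowCond (t.getD i []) (t.getD (i + 1) []) ∧ DiagCond (t.getD i []) (t.getD (i + 1) []))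

section Weights

variable {K : Type*} [Field K]

/-- The weight of an entry `b` whose left neighbour is `left` and whose up-left
neighbour is `upleft`, the column carrying the variable value `xv`:
`xv/y_b - 1` if `left = b`, `xv/y_b` if `left < b < upleft`, and `1` otherwise. -/
noncomputable def entryW (xv : K) (y : ℕ → K) (b left upleft : ℕ) : K :=
  if left = b then xv / y b - 1
  else if left < b ∧ b < upleft then xv / y b
  else 1

/-- The product of the weights of the entries of the column `next`, whose left
neighbour column is `prev` (one entry longer). -/
noncomputable def colW (xv : K) (y : ℕ → K) (prev next : List ℕ) : K :=
  ∏ p ∈ Finset.range next.length,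
    entryW xv y (next.getD p 0) (prev.getD (p + 1) 0) (prev.getD p 0)

/-- The weight of a staircase: the `m`-th column after the first carries the
variable `x m`. -/
noncomputable def stairW (x y : ℕ → K) (t : List (List ℕ)) : K :=
  ∏ m ∈ Finset.range (t.length - 1), colW (x (m + 1)) y (t.getD m []) (t.getD (m + 1) [])

/-- The partition function `F(u, v)`: the sum of the weights of all staircases
with first column `u` and last column `v`. -/
noncomputable def Fpart (u v : List ℕ) (x y : ℕ → K) : K :=
  ∑ᶠ t ∈ {t : List (List ℕ) | IsStaircase t ∧ t.headD [] = u ∧ t.getLastD [] = v},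
    stairW x y t

/-- `x^{ρ_r} = x₁^{r-1} x₂^{r-2} ⋯ x_r^0`. -/
noncomputable def xRho (r : ℕ) (x : ℕ → K) : K :=
  ∏ i ∈ Finset.range r, (x (i + 1)) ^ (r - 1 - i)

/-- `Π_i y_i^{α_i}` for an exponent list `α`. -/
noncomputable def yPowL (y : ℕ → K) (α : List ℕ) : K :=
  ∏ i ∈ Finset.range α.length, (y (i + 1)) ^ (α.getD i 0)

/-- `y^{⟨u⟩} = Π_m y_m^{⟨u⟩_m}` where `⟨u⟩_m` is the level of the value `m`. -/
noncomputable def yLev (u : List ℕ) (y : ℕ → K) : K :=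
  ∏ m ∈ Finset.range (u.foldr max 0), (y (m + 1)) ^ ((u.filter (fun a => m + 1 < a)).length)

end Weights

/-- The column `[n, n-1, …, 1]`. -/
def colN (n : ℕ) : List ℕ := (List.range n).reverse.map (· + 1)

/-- The list `[1, 2, …, n]`. -/
def oneTo (n : ℕ) : List ℕ := (List.range n).map (· + 1)

/-- The increasing complement of `u` in `{1, …, n}`. -/
def compl (n : ℕ) (u : List ℕ) : List ℕ := (oneTo n).filter (fun a => a ∉ u)

/-- The list `ρ_r = [r-1, r-2, …, 1, 0]`. -/
def rhoList (r : ℕ) : List ℕ := (List.range r).map (fun i => r - 1 - i)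

/-- `p(u, n) = [ũ₁ - 1, ũ₂ - 2, …, ũ_k - k]` where `ũ` is the increasing
complement of `u` in `{1, …, n}`. -/
def pSeq (n : ℕ) (u : List ℕ) : List ℕ := (compl n u).mapIdx (fun i a => a - (i + 1))

/-- Action of a permutation `w ∈ S_r` on the variables `x₁, …, x_r` of an assignment. -/
def permuteVars {α : Type*} {r : ℕ} (w : Equiv.Perm (Fin r)) (x : ℕ → α) : ℕ → α :=
  fun j => if h : 1 ≤ j ∧ j - 1 < r then x ((w ⟨j - 1, h.2⟩).val + 1) else x j

/-! ### Skew diagrams.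

The diagram of a weakly increasing `ζ ∈ ℕ^r` has rows `1, …, r` from top to
bottom (0-based `i` below), row `i` consisting of boxes in columns `1, …, ζ_i`;
the (shifted) content of the box in 0-based row `i` and 1-based column `j` is
`c(□) = i + j`. -/

/-- The box in 0-based row `i` and (1-based) column `j` belongs to `ζ/μ`. -/
def InSkew (ζ μ : List ℕ) (i j : ℕ) : Prop :=
  i < ζ.length ∧ μ.getD i 0 < j ∧ j ≤ ζ.getD i 0

/-- `μ ⊆ ζ` componentwise (same number of rows). -/
def IsSkew (ζ μ : List ℕ) : Prop :=
  μ.length = ζ.length ∧ ∀ i, i < ζ.length → μ.getD i 0 ≤ ζ.getD i 0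

/-- `ζ/μ` is a ribbon: it contains no `2 × 2` block of boxes. -/
def IsRibbon (ζ μ : List ℕ) : Prop :=
  IsSkew ζ μ ∧
    ¬ ∃ i j, InSkew ζ μ i j ∧ InSkew ζ μ i (j + 1) ∧
      InSkew ζ μ (i + 1) j ∧ InSkew ζ μ (i + 1) (j + 1)

/-- `ζ/μ` is a vertical strip: at most one box in each row. -/
def IsVStrip (ζ μ : List ℕ) : Prop :=
  IsSkew ζ μ ∧ ∀ i, i < ζ.length → ζ.getD i 0 ≤ μ.getD i 0 + 1

/-- `ζ/μ` is a horizontal strip: at most one box in each column. -/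
def IsHStrip (ζ μ : List ℕ) : Prop :=
  IsSkew ζ μ ∧ ∀ i j, InSkew ζ μ i j → ¬ InSkew ζ μ (i + 1) j

/-- `ψ^v(ζ/μ) = Π_{□ ∈ ζ/μ} y_{c(□)}`. -/
noncomputable def psiV (ζ μ : List ℕ) : Rpoly :=
  ∏ i ∈ Finset.range ζ.length, ∏ j ∈ Finset.Ioc (μ.getD i 0) (ζ.getD i 0), yP (i + j)

/-- `ψ^h(ζ/μ) = Π_{□ ∈ ζ/μ} (x - y_{c(□)})`. -/
noncomputable def psiH (ζ μ : List ℕ) (xv : Rpoly) : Rpoly :=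
  ∏ i ∈ Finset.range ζ.length, ∏ j ∈ Finset.Ioc (μ.getD i 0) (ζ.getD i 0), (xv - yP (i + j))

/-- The ribbon weight `θ(ζ/μ)`: a non-terminal box contributes `x - y_{c(□)}`;
a terminal box contributes `y_{c(□)}` if it lies directly above another box of
the ribbon, and `x` otherwise. -/
noncomputable def thetaW (ζ μ : List ℕ) (xv : Rpoly) : Rpoly :=
  ∏ i ∈ Finset.range ζ.length, ∏ j ∈ Finset.Ioc (μ.getD i 0) (ζ.getD i 0),
    if j < ζ.getD i 0 then xv - yP (i + j)
    else if i + 1 < ζ.length ∧ μ.getD (i + 1) 0 < j ∧ j ≤ ζ.getD (i + 1) 0 then yP (i + j)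
    else xv

/-! ### Complete functions of differences of alphabets, and multi-Schur functions. -/

/-- `S_m(A - B)`: the coefficient of `t^m` in `Π_{b ∈ B} (1 - t b) · Π_{a ∈ A} (1 - t a)⁻¹`
(zero for `m < 0`). -/
noncomputable def Scomp {K : Type*} [Field K] (m : ℤ) (A B : List K) : K :=
  if 0 ≤ m then
    PowerSeries.coeff (R := K) m.toNat
      ((B.map (fun b => 1 - PowerSeries.C (R := K) b * PowerSeries.X)).prod *
        ((A.map (fun a => 1 - PowerSeries.C (R := K) a * PowerSeries.X)).prod)⁻¹)
  else 0

/-- The multi-Schur function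
`S_{w/u'}(z - y₁, …, z - y_N // x₁, …, x_N) = det |S_{w_j - u'_i + j - i}(z + x_i - y_j)|`. -/
noncomputable def multiSchur {K : Type*} [Field K] (N : ℕ) (w u' : ℕ → ℤ) (z : List K)
    (ys xs : ℕ → List K) : K :=
  Matrix.det (Matrix.of fun i j : Fin N =>
    Scomp (w j - u' i + ((j : ℕ) : ℤ) - ((i : ℕ) : ℤ)) (z ++ xs i) (ys j))

/-! ### `S_∞`: permutations of the positive integers with finite support. -/

/-- Permutations of the positive integers (modelled as permutations of `ℕ`
fixing `0`) fixing all but finitely many integers. -/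
def SInfSet : Set (Equiv.Perm ℕ) := {σ | σ 0 = 0 ∧ {i | σ i ≠ i}.Finite}

/-- The least `n` such that `σ` fixes every `i ≥ n`. -/
noncomputable def bnd (σ : Equiv.Perm ℕ) : ℕ := sInf {n | ∀ i, n ≤ i → σ i = i}

/-- The list `[σ 1, …, σ m]` of values of `σ` on the segment it permutes. -/
noncomputable def permList (σ : Equiv.Perm ℕ) : List ℕ :=
  (List.range (bnd σ - 1)).map (fun i => σ (i + 1))

/-- The divided difference `∂_σ` for `σ ∈ S_∞`, computed along a reduced word of `σ`. -/
noncomputable def ddPerm (σ : Equiv.Perm ℕ) (f : Rpoly) : Rpoly :=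
  ddWord (sortWord (bnd σ * bnd σ) (permList σ)) f

/-- The specialization `x_i ↦ y_i` (for every `i`). -/
noncomputable def specXY (f : Rpoly) : Rpoly :=
  MvPolynomial.aeval (Sum.elim (fun i => yP i) (fun i => yP i)) f


section AuxCount

/-- Number of entries `≤ m`. -/
def cntLe (l : List ℕ) (m : ℕ) : ℕ := l.countP (fun a => decide (a ≤ m))

/-- Number of entries `> m`. -/
def cntGt (l : List ℕ) (m : ℕ) : ℕ := l.countP (fun a => decide (m < a))

lemma cntLe_le_length (l : List ℕ) (m : ℕ) : cntLe l m ≤ l.length :=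
  List.countP_le_length

lemma cntGt_le_length (l : List ℕ) (m : ℕ) : cntGt l m ≤ l.length :=
  List.countP_le_length

lemma cnt_split (l : List ℕ) (m : ℕ) : cntLe l m + cntGt l m = l.length := by
  induction l with
  | nil => simp [cntLe, cntGt]
  | cons a t ih =>
    simp only [cntLe, cntGt, List.countP_cons, List.length_cons] at *
    by_cases h : a ≤ m
    · simp [h, show ¬ m < a by omega]
      omega
    · simp [h, show m < a by omega]
      omega

lemma cntLe_all {l : List ℕ} {m : ℕ} (h : ∀ a ∈ l, a ≤ m) : cntLe l m = l.length := by
  rw [cntLe, List.countP_eq_length]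
  intro a ha; simpa using h a ha

lemma keyAsc {l : List ℕ} (h : l.Pairwise (· < ·)) :
    ∀ i < l.length, ∀ m : ℕ, (l.getD i 0 ≤ m ↔ i < cntLe l m) := by
  induction l with
  | nil => simp
  | cons a t ih =>
    obtain ⟨ha, ht⟩ := List.pairwise_cons.mp h
    intro i hi m
    have hsplit : cntLe (a :: t) m = cntLe t m + if a ≤ m then 1 else 0 := by
      simp [cntLe, List.countP_cons]
    by_cases hm : a ≤ m
    · cases i with
      | zero => simp [hsplit, hm]
      | succ i =>
        have h2 := ih ht i (by simpa using hi) m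
        rw [List.getD_cons_succ, hsplit, if_pos hm, h2]
        omega
    · have h0 : cntLe t m = 0 := by
        rw [cntLe, List.countP_eq_zero]
        intro b hb
        have := ha b hb
        simp; omega
      cases i with
      | zero => simp [hsplit, hm, h0]
      | succ i =>
        have hmem : t.getD i 0 ∈ t := by
          rw [List.getD_eq_getElem t 0 (by simpa using hi)]
          exact List.getElem_mem _
        have := ha _ hmem
        rw [List.getD_cons_succ, hsplit, if_neg hm, h0]
        omega

lemma keyDesc {l : List ℕ} (h : l.Pairwise (· > ·)) :
    ∀ i < l.length, ∀ m : ℕ, (m < l.getD i 0 ↔ i < cntGt l m) := by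
  induction l with
  | nil => simp
  | cons a t ih =>
    obtain ⟨ha, ht⟩ := List.pairwise_cons.mp h
    intro i hi m
    have hsplit : cntGt (a :: t) m = cntGt t m + if m < a then 1 else 0 := by
      simp [cntGt, List.countP_cons]
    by_cases hm : m < a
    · cases i with
      | zero => simp [hsplit, hm]
      | succ i =>
        have h2 := ih ht i (by simpa using hi) m
        rw [List.getD_cons_succ, hsplit, if_pos hm, h2]
        omega
    · have h0 : cntGt t m = 0 := by
        rw [cntGt, List.countP_eq_zero]
        intro b hb
        have := ha b hb
        simp; omega
      cases i with
      | zero => simp [hsplit, hm, h0]; try omega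
      | succ i =>
        have hmem : t.getD i 0 ∈ t := by
          rw [List.getD_eq_getElem t 0 (by simpa using hi)]
          exact List.getElem_mem _
        have := ha _ hmem
        rw [List.getD_cons_succ, hsplit, if_neg hm, h0]
        omega

lemma ascGap {l : List ℕ} (h : l.Pairwise (· < ·)) {i j : ℕ} (hij : i ≤ j)
    (hj : j < l.length) : l.getD i 0 + (j - i) ≤ l.getD j 0 := by
  induction j, hij using Nat.le_induction with
  | base => simp
  | succ j hij ih =>
    have h1 : l.getD j 0 < l.getD (j + 1) 0 := by
      rw [List.getD_eq_getElem l 0 (by omega), List.getD_eq_getElem l 0 (by omega)]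
      exact List.pairwise_iff_getElem.mp h j (j+1) (by omega) (by omega) (by omega)
    have := ih (by omega)
    omega

lemma ascLB {l : List ℕ} (h : l.Pairwise (· < ·)) (hpos : ∀ a ∈ l, 1 ≤ a)
    {i : ℕ} (hi : i < l.length) : i + 1 ≤ l.getD i 0 := by
  have h1 := ascGap h (Nat.zero_le i) hi
  have h2 : 1 ≤ l.getD 0 0 := by
    apply hpos
    rw [List.getD_eq_getElem l 0 (by omega)]
    exact List.getElem_mem _
  omega

end AuxCount

section IffLemmas

lemma descLe_iff {u v : List ℕ} (hu : u.Pairwise (· > ·)) (hv : v.Pairwise (· > ·))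
    (hlen : u.length ≤ v.length) :
    (∀ p < u.length, u.getD p 0 ≤ v.getD p 0) ↔ ∀ m, cntGt u m ≤ cntGt v m := by
  constructor
  · intro h m
    rcases Nat.eq_zero_or_pos (cntGt u m) with h0 | h0
    · omega
    · set p := cntGt u m - 1 with hp
      have hpu : p < u.length := by
        have := cntGt_le_length u m; omega
      have h1 : m < u.getD p 0 := (keyDesc hu p hpu m).mpr (by omega)
      have h2 : m < v.getD p 0 := lt_of_lt_of_le h1 (h p hpu)
      have := (keyDesc hv p (by omega) m).mp h2
      omega
  · intro h p hp
    by_contra hc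
    push_neg at hc
    set m := v.getD p 0 with hm
    have h1 : p < cntGt u m := (keyDesc hu p hp m).mp hc
    have h2 : p < cntGt v m := lt_of_lt_of_le h1 (h m)
    have := (keyDesc hv p (by omega) m).mpr h2
    omega

lemma descShift_iff {u v : List ℕ} (hu : u.Pairwise (· > ·)) (hv : v.Pairwise (· > ·))
    (hlen : v.length = u.length + 1) :
    (∀ p < u.length, v.getD (p + 1) 0 ≤ u.getD p 0) ↔ ∀ m, cntGt v m ≤ cntGt u m + 1 := by
  constructor
  · intro h m
    rcases le_or_gt (cntGt v m) 1 with h0 | h0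
    · omega
    · set p := cntGt v m - 2 with hp
      have hpv : p + 1 < v.length := by
        have := cntGt_le_length v m; omega
      have h1 : m < v.getD (p + 1) 0 := (keyDesc hv (p + 1) hpv m).mpr (by omega)
      have hpu : p < u.length := by omega
      have h2 : m < u.getD p 0 := lt_of_lt_of_le h1 (h p hpu)
      have := (keyDesc hu p hpu m).mp h2
      omega
  · intro h p hp
    by_contra hc
    push_neg at hc
    set m := u.getD p 0 with hm
    have h1 : p + 1 < cntGt v m := (keyDesc hv (p + 1) (by omega) m).mp hc
    have h2 : p < cntGt u m := by have := h m; omega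
    have := (keyDesc hu p hp m).mpr h2
    omega

lemma ascLe_iff {a b : List ℕ} (ha : a.Pairwise (· < ·)) (hb : b.Pairwise (· < ·))
    (hlen : b.length ≤ a.length) :
    (∀ i < b.length, a.getD i 0 ≤ b.getD i 0) ↔ ∀ m, cntLe b m ≤ cntLe a m := by
  constructor
  · intro h m
    rcases Nat.eq_zero_or_pos (cntLe b m) with h0 | h0
    · omega
    · set i := cntLe b m - 1 with hi
      have hib : i < b.length := by have := cntLe_le_length b m; omega
      have h1 : b.getD i 0 ≤ m := (keyAsc hb i hib m).mpr (by omega)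
      have h2 : a.getD i 0 ≤ m := le_trans (h i hib) h1
      have := (keyAsc ha i (by omega) m).mp h2
      omega
  · intro h i hi
    set m := b.getD i 0 with hm
    have h1 : i < cntLe b m := (keyAsc hb i hi m).mp le_rfl
    have h2 : i < cntLe a m := lt_of_lt_of_le h1 (h m)
    exact (keyAsc ha i (by omega) m).mpr h2

lemma ascShift_iff {a b : List ℕ} (ha : a.Pairwise (· < ·)) (hb : b.Pairwise (· < ·))
    (hlen : a.length = b.length + 1) :
    (∀ i < b.length, b.getD i 0 ≤ a.getD (i + 1) 0) ↔ ∀ m, cntLe a m ≤ cntLe b m + 1 := by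
  constructor
  · intro h m
    rcases le_or_gt (cntLe a m) 1 with h0 | h0
    · omega
    · set i := cntLe a m - 2 with hi
      have hia : i + 1 < a.length := by have := cntLe_le_length a m; omega
      have h1 : a.getD (i + 1) 0 ≤ m := (keyAsc ha (i + 1) hia m).mpr (by omega)
      have hib : i < b.length := by omega
      have h2 : b.getD i 0 ≤ m := le_trans (h i hib) h1
      have := (keyAsc hb i hib m).mp h2
      omega
  · intro h i hi
    set m := a.getD (i + 1) 0 with hm
    have h1 : i + 1 < cntLe a m := (keyAsc ha (i + 1) (by omega) m).mp le_rfl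
    have h2 : i < cntLe b m := by have := h m; omega
    exact (keyAsc hb i hi m).mpr h2

end IffLemmas



section ComplementLemmas

lemma mem_oneTo {a n : ℕ} : a ∈ oneTo n ↔ 1 ≤ a ∧ a ≤ n := by
  simp only [oneTo, List.mem_map, List.mem_range]
  constructor
  · rintro ⟨i, hi, rfl⟩; omega
  · rintro ⟨h1, h2⟩; exact ⟨a - 1, by omega, by omega⟩

lemma oneTo_pairwise (n : ℕ) : (oneTo n).Pairwise (· < ·) :=
  (List.pairwise_lt_range (n := n)).map _ (fun _ _ h => by omega)

lemma oneTo_nodup (n : ℕ) : (oneTo n).Nodup :=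
  (oneTo_pairwise n).imp (fun h => Nat.ne_of_lt h)

lemma pairwise_gt_nodup {l : List ℕ} (h : l.Pairwise (· > ·)) : l.Nodup :=
  h.imp (fun h => Nat.ne_of_gt h)

lemma pairwise_lt_nodup {l : List ℕ} (h : l.Pairwise (· < ·)) : l.Nodup :=
  h.imp (fun h => Nat.ne_of_lt h)

lemma compl_pairwise (n : ℕ) (u : List ℕ) : (compl n u).Pairwise (· < ·) :=
  (oneTo_pairwise n).filter _

lemma compl_nodup (n : ℕ) (u : List ℕ) : (compl n u).Nodup :=
  pairwise_lt_nodup (compl_pairwise n u)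

lemma mem_compl {a n : ℕ} {u : List ℕ} : a ∈ compl n u ↔ (1 ≤ a ∧ a ≤ n) ∧ a ∉ u := by
  unfold _root_.compl
  simp [List.mem_filter, mem_oneTo]

lemma cntLe_eq_card {l : List ℕ} (hl : l.Nodup) (m : ℕ) :
    cntLe l m = (l.toFinset.filter (fun a => a ≤ m)).card := by
  rw [cntLe, List.countP_eq_length_filter, ← List.toFinset_card_of_nodup (hl.filter _),
    List.toFinset_filter]
  congr 1
  ext a
  simp

lemma cntLe_le_self {l : List ℕ} (hl : l.Nodup) (hpos : ∀ a ∈ l, 1 ≤ a) (m : ℕ) :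
    cntLe l m ≤ m := by
  rw [cntLe_eq_card hl]
  calc (l.toFinset.filter (fun a => a ≤ m)).card ≤ (Finset.Icc 1 m).card := by
        apply Finset.card_le_card
        intro a ha
        simp only [Finset.mem_filter, List.mem_toFinset] at ha
        simp only [Finset.mem_Icc]
        exact ⟨hpos a ha.1, ha.2⟩
    _ = m := by rw [Nat.card_Icc]; omega

lemma complCnt {n m : ℕ} {u : List ℕ} (hu : u.Nodup) (hmem : ∀ a ∈ u, 1 ≤ a ∧ a ≤ n)
    (hm : m ≤ n) : cntLe (compl n u) m + cntLe u m = m := by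
  rw [cntLe_eq_card hu, cntLe_eq_card (compl_nodup n u)]
  have hsub : u.toFinset.filter (fun a => a ≤ m) ⊆ Finset.Icc 1 m := by
    intro a ha
    simp only [Finset.mem_filter, List.mem_toFinset] at ha
    simp only [Finset.mem_Icc]
    exact ⟨(hmem a ha.1).1, ha.2⟩
  have heq : (compl n u).toFinset.filter (fun a => a ≤ m)
      = Finset.Icc 1 m \ u.toFinset.filter (fun a => a ≤ m) := by
    ext a
    simp only [Finset.mem_filter, List.mem_toFinset, Finset.mem_sdiff, Finset.mem_Icc,
      mem_compl]
    constructor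
    · rintro ⟨⟨⟨h1, h2⟩, h3⟩, h4⟩; exact ⟨⟨h1, h4⟩, fun h => h3 h.1⟩
    · rintro ⟨⟨h1, h2⟩, h3⟩
      refine ⟨⟨⟨h1, by omega⟩, fun h => h3 ⟨h, h2⟩⟩, h2⟩
  rw [heq, Finset.card_sdiff_of_subset hsub, Nat.card_Icc]
  have := Finset.card_le_card hsub
  rw [Nat.card_Icc] at this
  omega

lemma compl_length {n : ℕ} {u : List ℕ} (hu : u.Nodup) (hmem : ∀ a ∈ u, 1 ≤ a ∧ a ≤ n) :
    (compl n u).length = n - u.length := by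
  have h1 := complCnt hu hmem (le_refl n)
  have h2 : cntLe u n = u.length := cntLe_all (fun a ha => (hmem a ha).2)
  have h3 : cntLe (compl n u) n = (compl n u).length :=
    cntLe_all (fun a ha => (mem_compl.mp ha).1.2)
  omega

lemma nodup_length_le {n : ℕ} {l : List ℕ} (hl : l.Nodup) (hmem : ∀ a ∈ l, 1 ≤ a ∧ a ≤ n) :
    l.length ≤ n := by
  have h1 := cntLe_all (l := l) (m := n) (fun a ha => (hmem a ha).2)
  have := cntLe_le_self hl (fun a ha => (hmem a ha).1) n
  omega

lemma pSeq_length (n : ℕ) (u : List ℕ) : (pSeq n u).length = (compl n u).length := by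
  simp [pSeq]

lemma pSeq_getD {n : ℕ} {u : List ℕ} {i : ℕ} (hi : i < (compl n u).length) :
    (pSeq n u).getD i 0 = (compl n u).getD i 0 - (i + 1) := by
  rw [List.getD_eq_getElem _ 0 (by simp [pSeq_length]; omega),
    List.getD_eq_getElem _ 0 hi]
  simp [pSeq]

lemma sortedEq {r : ℕ → ℕ → Prop} (hr : ∀ a b, r a b → r b a → False) :
    ∀ {l₁ l₂ : List ℕ}, l₁.Pairwise r → l₂.Pairwise r → (∀ a, a ∈ l₁ ↔ a ∈ l₂) → l₁ = l₂ := by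
  intro l₁
  induction l₁ with
  | nil =>
    intro l₂ _ _ hm
    cases l₂ with
    | nil => rfl
    | cons b s => exact absurd ((hm b).mpr (List.mem_cons_self)) (List.not_mem_nil)
  | cons a t ih =>
    intro l₂ h₁ h₂ hm
    cases l₂ with
    | nil => exact absurd ((hm a).mp (List.mem_cons_self)) (List.not_mem_nil)
    | cons b s =>
      obtain ⟨ha, ht⟩ := List.pairwise_cons.mp h₁
      obtain ⟨hb, hs⟩ := List.pairwise_cons.mp h₂
      have hab : a = b := by
        rcases List.mem_cons.mp ((hm a).mp (List.mem_cons_self)) with h | h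
        · exact h
        · rcases List.mem_cons.mp ((hm b).mpr (List.mem_cons_self)) with h' | h'
          · exact h'.symm
          · exact absurd (ha b h') (fun hh => hr b a (hb a h) hh)
      subst hab
      have htails : ∀ x, x ∈ t ↔ x ∈ s := by
        intro x
        constructor
        · intro hx
          rcases List.mem_cons.mp ((hm x).mp (List.mem_cons_of_mem _ hx)) with h | h
          · exfalso; rw [h] at hx; exact hr a a (ha a hx) (ha a hx)
          · exact h
        · intro hx
          rcases List.mem_cons.mp ((hm x).mpr (List.mem_cons_of_mem _ hx)) with h | h
          · exfalso; rw [h] at hx; exact hr a a (hb a hx) (hb a hx)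
          · exact h
      rw [ih ht hs htails]

end ComplementLemmas



section CoreLemmas

lemma core {n k : ℕ} {u v : List ℕ} (hu : u.Pairwise (· > ·))
    (humem : ∀ a ∈ u, 1 ≤ a ∧ a ≤ n) (hv : v.Pairwise (· > ·))
    (hvmem : ∀ a ∈ v, 1 ≤ a ∧ a ≤ n) (hulen : u.length + k = n)
    (hvlen : v.length + k = n + 1) :
    ((∀ p < u.length, v.getD (p + 1) 0 ≤ u.getD p 0) ↔
      ∀ i < (compl n v).length, (compl n u).getD i 0 ≤ (compl n v).getD i 0) ∧
    ((∀ p < u.length, u.getD p 0 ≤ v.getD p 0) ↔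
      ∀ i < (compl n v).length, (compl n v).getD i 0 ≤ (compl n u).getD (i + 1) 0) := by
  have hund := pairwise_gt_nodup hu
  have hvnd := pairwise_gt_nodup hv
  have hk1 : 1 ≤ k := by have := nodup_length_le hvnd hvmem; omega
  have hvu : v.length = u.length + 1 := by omega
  have hcu : (compl n u).length = k := by rw [compl_length hund humem]; omega
  have hcv : (compl n v).length = k - 1 := by rw [compl_length hvnd hvmem]; omega
  have hallu : ∀ m, n < m → cntLe u m = u.length :=
    fun m hm => cntLe_all (fun a ha => by have := (humem a ha).2; omega)
  have hallv : ∀ m, n < m → cntLe v m = v.length :=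
    fun m hm => cntLe_all (fun a ha => by have := (hvmem a ha).2; omega)
  have hallcu : ∀ m, n < m → cntLe (compl n u) m = (compl n u).length :=
    fun m hm => cntLe_all (fun a ha => by have := (mem_compl.mp ha).1.2; omega)
  have hallcv : ∀ m, n < m → cntLe (compl n v) m = (compl n v).length :=
    fun m hm => cntLe_all (fun a ha => by have := (mem_compl.mp ha).1.2; omega)
  have key1 : (∀ m, cntGt v m ≤ cntGt u m + 1) ↔
      (∀ m, cntLe (compl n v) m ≤ cntLe (compl n u) m) := by
    constructor
    · intro h m
      rcases le_or_gt m n with hm | hm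
      · have h1 := complCnt hund humem hm
        have h2 := complCnt hvnd hvmem hm
        have h3 := cnt_split u m
        have h4 := cnt_split v m
        have := h m
        omega
      · rw [hallcu m hm, hallcv m hm]; omega
    · intro h m
      rcases le_or_gt m n with hm | hm
      · have h1 := complCnt hund humem hm
        have h2 := complCnt hvnd hvmem hm
        have h3 := cnt_split u m
        have h4 := cnt_split v m
        have := h m
        omega
      · have h3 := cnt_split u m
        have h4 := cnt_split v m
        rw [hallu m hm] at h3
        rw [hallv m hm] at h4
        omega
  have key2 : (∀ m, cntGt u m ≤ cntGt v m) ↔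
      (∀ m, cntLe (compl n u) m ≤ cntLe (compl n v) m + 1) := by
    constructor
    · intro h m
      rcases le_or_gt m n with hm | hm
      · have h1 := complCnt hund humem hm
        have h2 := complCnt hvnd hvmem hm
        have h3 := cnt_split u m
        have h4 := cnt_split v m
        have := h m
        omega
      · rw [hallcu m hm, hallcv m hm]; omega
    · intro h m
      rcases le_or_gt m n with hm | hm
      · have h1 := complCnt hund humem hm
        have h2 := complCnt hvnd hvmem hm
        have h3 := cnt_split u m
        have h4 := cnt_split v m
        have h5 := cntLe_le_self hund (fun a ha => (humem a ha).1) m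
        have h6 := cntLe_le_self hvnd (fun a ha => (hvmem a ha).1) m
        have := h m
        omega
      · have h3 := cnt_split u m
        have h4 := cnt_split v m
        rw [hallu m hm] at h3
        omega
  constructor
  · rw [descShift_iff hu hv hvu,
      ascLe_iff (compl_pairwise n u) (compl_pairwise n v) (by omega)]
    exact key1
  · rw [descLe_iff hu hv (by omega),
      ascShift_iff (compl_pairwise n u) (compl_pairwise n v) (by omega)]
    exact key2

lemma ribbon_iff {n k : ℕ} {u : List ℕ} (hu : u.Pairwise (· > ·))
    (humem : ∀ a ∈ u, 1 ≤ a ∧ a ≤ n) (hulen : u.length + k = n) (hk : 1 ≤ k)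
    {w μ : List ℕ} (hw : w.Pairwise (· < ·)) (hwmem : ∀ a ∈ w, 1 ≤ a)
    (hwlen : w.length + 1 = k) (hμlen : μ.length = w.length)
    (hform : ∀ i < w.length, μ.getD i 0 + (i + 1) = w.getD i 0)
    (hμs : μ.Pairwise (· ≤ ·)) :
    IsRibbon ((pSeq n u).map (· + 1)) (0 :: μ) ↔
      ∀ i < w.length, (compl n u).getD i 0 ≤ w.getD i 0 ∧
        w.getD i 0 ≤ (compl n u).getD (i + 1) 0 := by
  have hund := pairwise_gt_nodup hu
  have hcu : (compl n u).length = k := by rw [compl_length hund humem]; omega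
  have hub : ∀ i < k, i + 1 ≤ (compl n u).getD i 0 := by
    intro i hi
    exact ascLB (compl_pairwise n u) (fun a ha => (mem_compl.mp ha).1.1) (by omega)
  have hgap : ∀ i, i + 1 < k →
      (compl n u).getD i 0 + 1 ≤ (compl n u).getD (i + 1) 0 := by
    intro i hi
    have := ascGap (compl_pairwise n u) (show i ≤ i + 1 by omega) (by omega)
    omega
  set ζ := (pSeq n u).map (· + 1) with hζdef
  have hζlen : ζ.length = k := by simp [hζdef, pSeq_length]; omega
  have hζ : ∀ i < k, ζ.getD i 0 = (compl n u).getD i 0 - i := by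
    intro i hi
    have h1 : ζ.getD i 0 = (pSeq n u).getD i 0 + 1 := by
      rw [List.getD_eq_getElem _ 0 (by omega), List.getD_eq_getElem _ 0
        (by rw [pSeq_length]; omega)]
      simp [hζdef]
    rw [h1, pSeq_getD (by omega)]
    have := hub i hi
    omega
  have hmu : ∀ i, (0 :: μ).getD (i + 1) 0 = μ.getD i 0 := fun i => List.getD_cons_succ
  have hmono0 : ∀ i < μ.length, (0 :: μ).getD i 0 ≤ μ.getD i 0 := by
    intro i hi
    cases i with
    | zero => simp
    | succ j =>
      rw [hmu j]
      rw [List.getD_eq_getElem _ 0 (by omega), List.getD_eq_getElem _ 0 hi]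
      exact List.pairwise_iff_getElem.mp hμs j (j + 1) (by omega) hi (by omega)
  constructor
  · rintro ⟨⟨hsklen, hsk⟩, h2x2⟩
    intro i hi
    have hik : i + 1 < k := by omega
    have h1 := hζ i (by omega)
    have h2 := hζ (i + 1) hik
    have h3 := hub i (by omega)
    have h4 := hub (i + 1) hik
    have h5 := hform i hi
    have h6 := hsk (i + 1) (by omega)
    rw [hmu i] at h6
    constructor
    · by_contra hc
      push_neg at hc
      set j := μ.getD i 0 + 1 with hjdef
      have hg := hgap i hik
      have hm0 := hmono0 i (by omega)
      exact h2x2 ⟨i, j, ⟨by omega, by omega, by omega⟩, ⟨by omega, by omega, by omega⟩,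
        ⟨by omega, by rw [hmu i]; omega, by omega⟩, ⟨by omega, by rw [hmu i]; omega, by omega⟩⟩
    · omega
  · intro hT
    refine ⟨⟨by simp [hζlen]; omega, ?_⟩, ?_⟩
    · intro i hi
      rw [hζlen] at hi
      cases i with
      | zero => simp
      | succ j =>
        have hjw : j < w.length := by omega
        have h1 := (hT j hjw).2
        have h2 := hζ (j + 1) hi
        have h3 := hub (j + 1) hi
        have h4 := hform j hjw
        rw [hmu j]
        omega
    · rintro ⟨i, j, ⟨hi1, hi2, hi3⟩, ⟨hj1, hj2, hj3⟩, ⟨hk1', hk2, hk3⟩, _⟩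
      have hik : i < w.length := by rw [hζlen] at hk1'; omega
      have h1 := (hT i hik).1
      have h2 := hζ i (by omega)
      have h3 := hub i (by omega)
      have h4 := hform i hik
      rw [hmu i] at hk2
      omega

end CoreLemmas


lemma mem_iff_not_compl {n : ℕ} {v : List ℕ} (hvmem : ∀ a ∈ v, 1 ≤ a ∧ a ≤ n) (a : ℕ) :
    a ∈ v ↔ (1 ≤ a ∧ a ≤ n) ∧ a ∉ compl n v := by
  constructor
  · intro ha
    exact ⟨hvmem a ha, fun hc => (mem_compl.mp hc).2 ha⟩
  · rintro ⟨hb, hnc⟩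
    by_contra hav
    exact hnc (mem_compl.mpr ⟨hb, hav⟩)


/-- `v ↦ p(v,n)` is a bijection between the columns `v` of length
`n-k+1` with `v₁ ≤ n` such that `(v, u)` is a staircase, and the weakly
increasing `μ ∈ ℕ^{k-1}` such that `(p(u,n) + 1^k)/μ` is a ribbon (`μ` padded
with an initial `0` part). -/
theorem staircase_ribbon_bijection (n k : ℕ) (hn : 0 < n) (u : List ℕ) (hu : IsCol u)
    (hun : ∀ a ∈ u, a ≤ n) (hlen : u.length + k = n) :
    Set.BijOn (pSeq n)
      {v : List ℕ | IsCol v ∧ v.length + k = n + 1 ∧ (∀ a ∈ v, a ≤ n) ∧ IsStaircase [v, u]}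
      {μ : List ℕ | μ.length + 1 = k ∧ μ.Pairwise (· ≤ ·) ∧
        IsRibbon ((pSeq n u).map (· + 1)) (0 :: μ)} := by
  have hupair : u.Pairwise (· > ·) := List.isChain_iff_pairwise.mp hu.1
  have humem : ∀ a ∈ u, 1 ≤ a ∧ a ≤ n := fun a ha => ⟨hu.2 a ha, hun a ha⟩
  have hund := pairwise_gt_nodup hupair
  have hcu : (compl n u).length = k := by rw [compl_length hund humem]; omega
  -- unpack a source element
  have hsrc : ∀ v, v ∈ {v : List ℕ | IsCol v ∧ v.length + k = n + 1 ∧ (∀ a ∈ v, a ≤ n) ∧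
      IsStaircase [v, u]} →
      v.Pairwise (· > ·) ∧ (∀ a ∈ v, 1 ≤ a ∧ a ≤ n) ∧ v.length + k = n + 1 ∧
      (∀ p < u.length, v.getD (p + 1) 0 ≤ u.getD p 0) ∧
      (∀ p < u.length, u.getD p 0 ≤ v.getD p 0) := by
    intro v hv
    obtain ⟨hvcol, hvlen, hvle, hstair⟩ := hv
    have hvpair : v.Pairwise (· > ·) := List.isChain_iff_pairwise.mp hvcol.1
    have hvmem : ∀ a ∈ v, 1 ≤ a ∧ a ≤ n := fun a ha => ⟨hvcol.2 a ha, hvle a ha⟩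
    obtain ⟨-, -, -, hcond⟩ := hstair
    have hrd := hcond 0 (by norm_num)
    simp only [List.getD_cons_zero, List.getD_cons_succ, zero_add] at hrd
    exact ⟨hvpair, hvmem, hvlen, hrd.1, hrd.2⟩
  -- key facts for a source element
  have hkey : ∀ v, v ∈ {v : List ℕ | IsCol v ∧ v.length + k = n + 1 ∧ (∀ a ∈ v, a ≤ n) ∧
      IsStaircase [v, u]} →
      pSeq n v ∈ {μ : List ℕ | μ.length + 1 = k ∧ μ.Pairwise (· ≤ ·) ∧
        IsRibbon ((pSeq n u).map (· + 1)) (0 :: μ)} := by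
    intro v hv
    obtain ⟨hvpair, hvmem, hvlen, hrow, hdiag⟩ := hsrc v hv
    have hvnd := pairwise_gt_nodup hvpair
    have hk1 : 1 ≤ k := by have := nodup_length_le hvnd hvmem; omega
    have hcv : (compl n v).length = k - 1 := by rw [compl_length hvnd hvmem]; omega
    have hμlen : (pSeq n v).length = (compl n v).length := pSeq_length n v
    have hwb : ∀ i < (compl n v).length, i + 1 ≤ (compl n v).getD i 0 := by
      intro i hi
      exact ascLB (compl_pairwise n v) (fun a ha => (mem_compl.mp ha).1.1) hi
    have hform : ∀ i < (compl n v).length,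
        (pSeq n v).getD i 0 + (i + 1) = (compl n v).getD i 0 := by
      intro i hi
      rw [pSeq_getD hi]
      have := hwb i hi
      omega
    have hμs : (pSeq n v).Pairwise (· ≤ ·) := by
      apply List.pairwise_iff_getElem.mpr
      intro i j hi hj hij
      rw [hμlen] at hi hj
      rw [← List.getD_eq_getElem _ 0 (by rw [hμlen]; omega),
        ← List.getD_eq_getElem _ 0 (by rw [hμlen]; omega)]
      have h1 := hform i (by omega)
      have h2 := hform j hj
      have h3 := ascGap (compl_pairwise n v) (show i ≤ j by omega) hj
      omega
    have hcore := core hupair humem hvpair hvmem hlen hvlen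
    have hT1 := hcore.1.mp hrow
    have hT2 := hcore.2.mp hdiag
    refine ⟨by omega, hμs, ?_⟩
    rw [ribbon_iff hupair humem hlen hk1 (compl_pairwise n v)
      (fun a ha => (mem_compl.mp ha).1.1) (by omega) hμlen hform hμs]
    exact fun i hi => ⟨hT1 i hi, hT2 i hi⟩
  refine ⟨hkey, ?_, ?_⟩
  · -- injectivity
    intro v hv v' hv' heq
    obtain ⟨hvpair, hvmem, hvlen, -, -⟩ := hsrc v hv
    obtain ⟨hvpair', hvmem', hvlen', -, -⟩ := hsrc v' hv'
    have hvnd := pairwise_gt_nodup hvpair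
    have hvnd' := pairwise_gt_nodup hvpair'
    have hclen : (compl n v).length = (compl n v').length := by
      rw [compl_length hvnd hvmem, compl_length hvnd' hvmem']; omega
    have hcompl : compl n v = compl n v' := by
      apply List.ext_getElem hclen
      intro i h1 h2
      rw [← List.getD_eq_getElem _ 0 h1, ← List.getD_eq_getElem _ 0 h2]
      have hf1 : (pSeq n v).getD i 0 = (compl n v).getD i 0 - (i + 1) := pSeq_getD h1
      have hf2 : (pSeq n v').getD i 0 = (compl n v').getD i 0 - (i + 1) := pSeq_getD h2
      have hb1 := ascLB (compl_pairwise n v) (fun a ha => (mem_compl.mp ha).1.1) h1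
      have hb2 := ascLB (compl_pairwise n v') (fun a ha => (mem_compl.mp ha).1.1) h2
      rw [heq] at hf1
      omega
    apply sortedEq (r := (· > ·)) (fun a b h1 h2 => by omega) hvpair hvpair'
    intro a
    rw [mem_iff_not_compl hvmem a, mem_iff_not_compl hvmem' a, hcompl]
  · -- surjectivity
    intro μ hμ
    obtain ⟨hμlen, hμs, hrib⟩ := hμ
    have hk1 : 1 ≤ k := by omega
    have hkn : k ≤ n := by omega
    set w := μ.mapIdx (fun i a => a + (i + 1)) with hwdef
    have hwlen : w.length = μ.length := by simp [hwdef]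
    have hform : ∀ i < w.length, μ.getD i 0 + (i + 1) = w.getD i 0 := by
      intro i hi
      rw [List.getD_eq_getElem _ 0 hi, List.getD_eq_getElem _ 0 (by omega)]
      simp [hwdef]
    have hwpair : w.Pairwise (· < ·) := by
      apply List.pairwise_iff_getElem.mpr
      intro i j hi hj hij
      rw [← List.getD_eq_getElem _ 0 hi, ← List.getD_eq_getElem _ 0 hj]
      have h1 := hform i (by omega)
      have h2 := hform j hj
      have h3 : μ.getD i 0 ≤ μ.getD j 0 := by
        have h4 := List.pairwise_iff_getElem.mp hμs i j (by omega) (by omega) hij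
        rwa [← List.getD_eq_getElem _ 0 (by omega), ← List.getD_eq_getElem _ 0 (by omega)] at h4
      omega
    have hwpos : ∀ a ∈ w, 1 ≤ a := by
      intro a ha
      obtain ⟨i, hi, rfl⟩ := List.mem_iff_getElem.mp ha
      rw [← List.getD_eq_getElem _ 0 hi]
      have := hform i hi
      omega
    have hT := (ribbon_iff (w := w) (μ := μ) hupair humem hlen hk1 hwpair hwpos
      (by omega) hwlen.symm hform hμs).mp hrib
    have hwle : ∀ a ∈ w, a ≤ n := by
      intro a ha
      obtain ⟨i, hi, rfl⟩ := List.mem_iff_getElem.mp ha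
      rw [← List.getD_eq_getElem _ 0 hi]
      have h1 := (hT i hi).2
      have h2 : (compl n u).getD (i + 1) 0 ≤ n := by
        have hm : (compl n u).getD (i + 1) 0 ∈ compl n u := by
          rw [List.getD_eq_getElem _ 0 (by omega)]
          exact List.getElem_mem _
        exact (mem_compl.mp hm).1.2
      omega
    have hwmem : ∀ a ∈ w, 1 ≤ a ∧ a ≤ n := fun a ha => ⟨hwpos a ha, hwle a ha⟩
    have hwnd := pairwise_lt_nodup hwpair
    set v := (compl n w).reverse with hvdef
    have hvpair : v.Pairwise (· > ·) := by
      rw [hvdef, List.pairwise_reverse]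
      exact compl_pairwise n w
    have hvmem : ∀ a ∈ v, 1 ≤ a ∧ a ≤ n := by
      intro a ha
      rw [hvdef, List.mem_reverse] at ha
      exact (mem_compl.mp ha).1
    have hvnd := pairwise_gt_nodup hvpair
    have hvlen : v.length + k = n + 1 := by
      rw [hvdef, List.length_reverse, compl_length hwnd hwmem]
      omega
    have hmemv : ∀ a, a ∈ v ↔ ((1 ≤ a ∧ a ≤ n) ∧ a ∉ w) := by
      intro a
      rw [hvdef, List.mem_reverse, mem_compl]
    have hcomplv : compl n v = w := by
      apply sortedEq (r := (· < ·)) (fun a b h1 h2 => by omega)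
        (compl_pairwise n v) hwpair
      intro a
      rw [mem_compl, hmemv a]
      constructor
      · rintro ⟨hb, hnv⟩
        by_contra haw
        exact hnv ⟨hb, haw⟩
      · intro haw
        exact ⟨hwmem a haw, fun h => h.2 haw⟩
    have hpseq : pSeq n v = μ := by
      apply List.ext_getElem (by rw [pSeq_length, hcomplv]; omega)
      intro i h1 h2
      rw [← List.getD_eq_getElem _ 0 h1, ← List.getD_eq_getElem _ 0 h2]
      rw [pSeq_length, hcomplv] at h1
      have hf := pSeq_getD (u := v) (n := n) (i := i) (by rw [hcomplv]; omega)
      rw [hcomplv] at hf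
      have := hform i h1
      omega
    have hcore := core hupair humem hvpair hvmem hlen hvlen
    rw [hcomplv] at hcore
    refine ⟨v, ⟨⟨List.isChain_iff_pairwise.mpr hvpair, fun a ha => (hvmem a ha).1⟩,
      hvlen, fun a ha => (hvmem a ha).2, ?_⟩, hpseq⟩
    refine ⟨by simp, ?_, ?_, ?_⟩
    · intro i hi
      have hi2 : i = 0 ∨ i = 1 := by simp at hi; omega
      rcases hi2 with rfl | rfl
      · simp
      · simp only [List.getD_cons_succ, List.getD_cons_zero]
        omega
    · intro c hc
      simp only [List.mem_cons, List.mem_singleton, List.not_mem_nil, or_false] at hc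
      rcases hc with rfl | rfl
      · exact ⟨List.isChain_iff_pairwise.mpr hvpair, fun a ha => (hvmem a ha).1⟩
      · exact hu
    · intro i hi
      have hi0 : i = 0 := by simp at hi; omega
      subst hi0
      simp only [List.getD_cons_zero, List.getD_cons_succ, zero_add]
      constructor
      · exact hcore.1.mpr (fun i hi => (hT i hi).1)
      · exact hcore.2.mpr (fun i hi => (hT i hi).2)
end

section
/- Let u be a column of length r with smallest entry u_r = k > 1. Then F(u,[ ]) is obtained from F([u_1−k+1, u_2−k+1, …, u_r−k+1], [ ]) by increasing the index of each variable y_i to y_{i+k−1} (i.e. substituting y_i ↦ y_{i+k−1} for all i). -/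
open scoped BigOperators

section Helpers

lemma getD_map_lt (f : ℕ → ℕ) (l : List ℕ) {p : ℕ} (h : p < l.length) :
    (l.map f).getD p 0 = f (l.getD p 0) := by
  rw [List.getD_eq_getElem l 0 h, List.getD_eq_getElem _ 0 (by simpa using h)]
  simp

lemma getLastD_eq_getD (l : List ℕ) (h : l ≠ []) :
    l.getLastD 0 = l.getD (l.length - 1) 0 := by
  suffices hgen : ∀ d, l ≠ [] → l.getLastD d = l.getD (l.length - 1) 0 from hgen 0 h
  clear h
  induction l with
  | nil => intro d h; simp at h
  | cons a t ih =>
    intro d _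
    cases t with
    | nil => simp
    | cons b t' =>
      rw [List.getLastD_cons, ih a (by simp)]
      simp [List.getD_cons_succ]

lemma col_ge_last {c : List ℕ} (h : List.Chain' (· > ·) c) {a : ℕ} (ha : a ∈ c) :
    c.getLastD 0 ≤ a := by
  have hp := List.isChain_iff_pairwise.mp h
  obtain ⟨i, hi, rfl⟩ := List.mem_iff_getElem.mp ha
  have hne : c ≠ [] := by rintro rfl; simp at hi
  rw [getLastD_eq_getD c hne, List.getD_eq_getElem c 0 (by omega)]
  rcases eq_or_lt_of_le (Nat.le_sub_one_of_lt hi) with h1 | h1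
  · simp [h1]
  · exact le_of_lt ((List.pairwise_iff_getElem.mp hp) i (c.length - 1) hi (by omega) h1)

lemma headD_eq_getD (t : List (List ℕ)) : t.headD [] = t.getD 0 [] := by
  cases t <;> simp

lemma getD_map_col (F : List ℕ → List ℕ) (hF : F [] = []) (t : List (List ℕ)) (i : ℕ) :
    (t.map F).getD i [] = F (t.getD i []) := by
  by_cases h : i < t.length
  · rw [List.getD_eq_getElem t _ h, List.getD_eq_getElem _ _ (by simpa using h)]
    simp
  · rw [List.getD_eq_default _ _ (by simpa using not_lt.mp h),
      List.getD_eq_default _ _ (not_lt.mp h), hF]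

lemma headD_map (F : List ℕ → List ℕ) (hF : F [] = []) (t : List (List ℕ)) :
    (t.map F).headD [] = F (t.headD []) := by
  cases t with
  | nil => simpa
  | cons a l => simp

lemma getLastD_map (F : List ℕ → List ℕ) (hF : F [] = []) (t : List (List ℕ)) :
    (t.map F).getLastD [] = F (t.getLastD []) := by
  suffices h : ∀ (t : List (List ℕ)) (d : List ℕ), (t.map F).getLastD (F d) = F (t.getLastD d) by
    have := h t []; rwa [hF] at this
  intro t
  induction t with
  | nil => intro d; simp
  | cons a l ih => intro d; simp only [List.map_cons, List.getLastD_cons]; exact ih a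

end Helpers

section Stair

lemma stair_len {t : List (List ℕ)} (ht : IsStaircase t) {i : ℕ} (h : i + 1 < t.length) :
    (t.getD i []).length = (t.getD (i + 1) []).length + 1 := by
  have h1 := ht.2.1 i (by omega)
  have h2 := ht.2.1 (i + 1) h
  omega

lemma stair_col_mem {t : List (List ℕ)} {i : ℕ} (hi : i < t.length) : t.getD i [] ∈ t := by
  rw [List.getD_eq_getElem t _ hi]; exact List.getElem_mem _

lemma stair_entries_ge {t : List (List ℕ)} (ht : IsStaircase t) (k : ℕ)
    (hk : ∀ a ∈ t.getD 0 [], k ≤ a) :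
    ∀ i, i < t.length → ∀ a ∈ t.getD i [], k ≤ a := by
  intro i
  induction i with
  | zero => intro _; exact hk
  | succ i ih =>
    intro hi a ha
    have hlen := stair_len ht hi
    have hc'ne : t.getD (i + 1) [] ≠ [] := by
      intro h; rw [h] at ha; simp at ha
    have hc'pos : 0 < (t.getD (i + 1) []).length := List.length_pos_iff.mpr hc'ne
    have hcol' : IsCol (t.getD (i + 1) []) := ht.2.2.1 _ (stair_col_mem hi)
    have hge : (t.getD (i + 1) []).getLastD 0 ≤ a := col_ge_last hcol'.1 ha
    have hrow := (ht.2.2.2 i hi).1 ((t.getD (i + 1) []).length - 1) (by omega)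
    have hmem : (t.getD i []).getD ((t.getD (i + 1) []).length - 1 + 1) 0 ∈ t.getD i [] := by
      rw [List.getD_eq_getElem _ 0 (by omega)]
      exact List.getElem_mem _
    have hkc := ih (by omega) _ hmem
    rw [getLastD_eq_getD _ hc'ne] at hge
    omega

end Stair

section Maps

lemma stair_map_add (s : ℕ) {t : List (List ℕ)} (ht : IsStaircase t) :
    IsStaircase (t.map (List.map (· + s))) := by
  have hF : (List.map (· + s)) ([] : List ℕ) = [] := by simp
  refine ⟨by simp [ht.1], ?_, ?_, ?_⟩
  · intro i hi
    rw [getD_map_col _ hF, getD_map_col _ hF]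
    simp only [List.length_map]
    exact ht.2.1 i (by simpa using hi)
  · intro c hc
    obtain ⟨c₀, hc₀, rfl⟩ := List.mem_map.mp hc
    have hcol := ht.2.2.1 c₀ hc₀
    constructor
    · exact (List.isChain_map _).mpr (hcol.1.imp (fun h => by omega))
    · intro a ha
      obtain ⟨a₀, _, rfl⟩ := List.mem_map.mp ha
      have := hcol.2 a₀ ‹_›
      omega
  · intro i hi
    have hi' : i + 1 < t.length := by simpa using hi
    have hlen := stair_len ht hi'
    constructor
    · intro p hp
      rw [getD_map_col _ hF] at hp ⊢
      rw [getD_map_col _ hF]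
      simp only [List.length_map] at hp
      rw [getD_map_lt _ _ hp, getD_map_lt _ _ (by omega : p + 1 < (t.getD i []).length)]
      have := (ht.2.2.2 i hi').1 p hp
      omega
    · intro p hp
      rw [getD_map_col _ hF] at hp ⊢
      rw [getD_map_col _ hF]
      simp only [List.length_map] at hp
      rw [getD_map_lt _ _ hp, getD_map_lt _ _ (by omega : p < (t.getD i []).length)]
      have := (ht.2.2.2 i hi').2 p hp
      omega

lemma stair_map_sub (s : ℕ) {t : List (List ℕ)} (ht : IsStaircase t)
    (hge : ∀ i, i < t.length → ∀ a ∈ t.getD i [], s + 1 ≤ a) :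
    IsStaircase (t.map (List.map (· - s))) := by
  have hF : (List.map (· - s)) ([] : List ℕ) = [] := by simp
  refine ⟨by simp [ht.1], ?_, ?_, ?_⟩
  · intro i hi
    rw [getD_map_col _ hF, getD_map_col _ hF]
    simp only [List.length_map]
    exact ht.2.1 i (by simpa using hi)
  · intro c hc
    obtain ⟨c₀, hc₀, rfl⟩ := List.mem_map.mp hc
    have hcol := ht.2.2.1 c₀ hc₀
    obtain ⟨i, hi, rfl⟩ := List.mem_iff_getElem.mp hc₀
    have hge' : ∀ a ∈ t[i], s + 1 ≤ a := by
      intro a ha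
      exact hge i hi a (by rwa [List.getD_eq_getElem t _ hi])
    constructor
    · refine (List.isChain_map _).mpr ?_
      refine List.Pairwise.isChain ?_
      refine (List.isChain_iff_pairwise.mp hcol.1).imp_of_mem ?_
      intro a b ha hb hab
      have := hge' b hb
      show b - s < a - s
      omega
    · intro a ha
      obtain ⟨a₀, ha₀, rfl⟩ := List.mem_map.mp ha
      have := hge' a₀ ha₀
      omega
  · intro i hi
    have hi' : i + 1 < t.length := by simpa using hi
    have hlen := stair_len ht hi'
    constructor
    · intro p hp
      rw [getD_map_col _ hF] at hp ⊢
      rw [getD_map_col _ hF]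
      simp only [List.length_map] at hp
      rw [getD_map_lt _ _ hp, getD_map_lt _ _ (by omega : p + 1 < (t.getD i []).length)]
      have := (ht.2.2.2 i hi').1 p hp
      omega
    · intro p hp
      rw [getD_map_col _ hF] at hp ⊢
      rw [getD_map_col _ hF]
      simp only [List.length_map] at hp
      rw [getD_map_lt _ _ hp, getD_map_lt _ _ (by omega : p < (t.getD i []).length)]
      have := (ht.2.2.2 i hi').2 p hp
      omega

lemma entryW_shift {K : Type*} [Field K] (xv : K) (y : ℕ → K) (s b l u' : ℕ) :
    entryW xv y (b + s) (l + s) (u' + s) = entryW xv (fun i => y (i + s)) b l u' := by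
  simp only [entryW, Nat.add_right_cancel_iff, Nat.add_lt_add_iff_right]

lemma stairW_map_add {K : Type*} [Field K] (x y : ℕ → K) (s : ℕ) {t : List (List ℕ)}
    (ht : IsStaircase t) :
    stairW x y (t.map (List.map (· + s))) = stairW x (fun i => y (i + s)) t := by
  have hF : (List.map (· + s)) ([] : List ℕ) = [] := by simp
  unfold stairW
  rw [List.length_map]
  refine Finset.prod_congr rfl ?_
  intro m hm
  have hm' : m + 1 < t.length := by
    have := Finset.mem_range.mp hm
    have : t.length ≠ 0 := by simp [ht.1]
    omega
  have hlen := stair_len ht hm'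
  rw [getD_map_col _ hF, getD_map_col _ hF]
  unfold colW
  rw [List.length_map]
  refine Finset.prod_congr rfl ?_
  intro p hp
  have hp' := Finset.mem_range.mp hp
  rw [getD_map_lt _ _ hp', getD_map_lt _ _ (by omega : p + 1 < (t.getD m []).length),
    getD_map_lt _ _ (by omega : p < (t.getD m []).length)]
  exact entryW_shift _ _ _ _ _ _

lemma map_roundtrip (s : ℕ) {t : List (List ℕ)}
    (hge : ∀ i, i < t.length → ∀ a ∈ t.getD i [], s ≤ a) :
    (t.map (List.map (· - s))).map (List.map (· + s)) = t := by
  rw [List.map_map]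
  conv_rhs => rw [← List.map_id t]
  refine List.map_congr_left ?_
  intro c hc
  obtain ⟨i, hi, rfl⟩ := List.mem_iff_getElem.mp hc
  simp only [Function.comp_apply, List.map_map, id]
  conv_rhs => rw [← List.map_id t[i]]
  refine List.map_congr_left ?_
  intro a ha
  have : s ≤ a := hge i hi a (by rwa [List.getD_eq_getElem t _ hi])
  simp only [Function.comp_apply, id]
  omega

end Maps

/-- for a column `u` of length `r` with smallest entry `u_r = k > 1`,
`F(u, [ ])` is obtained from `F([u₁ - k + 1, …, u_r - k + 1], [ ])` by the
substitution `y_i ↦ y_{i + k - 1}`. -/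
theorem F_left_truncated_shift {K : Type*} [Field K] (r k : ℕ) (u : List ℕ) (hu : IsCol u)
    (hlen : u.length = r) (hk : u.getLastD 0 = k) (hk1 : 1 < k)
    (x y : ℕ → K) (hy : ∀ i, y i ≠ 0) :
    Fpart u [] x y
      = Fpart (u.map (fun a => a - (k - 1))) [] x (fun i => y (i + (k - 1))) := by
  have hu_ge : ∀ a ∈ u, k ≤ a := by
    intro a ha
    have h := col_ge_last hu.1 ha
    rw [hk] at h
    exact h
  have hroundu : (u.map (fun a => a - (k - 1))).map (· + (k - 1)) = u := by
    rw [List.map_map]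
    conv_rhs => rw [← List.map_id u]
    refine List.map_congr_left ?_
    intro a ha
    have := hu_ge a ha
    simp only [Function.comp_apply, id]
    omega
  -- entries of any staircase in the left set are ≥ k
  have key : ∀ t : List (List ℕ), IsStaircase t → t.headD [] = u →
      ∀ i, i < t.length → ∀ a ∈ t.getD i [], k ≤ a := by
    intro t ht hh
    refine stair_entries_ge ht k ?_
    rw [← headD_eq_getD, hh]
    exact hu_ge
  unfold Fpart
  refine finsum_mem_eq_of_bijOn (fun t => t.map (List.map (· - (k - 1)))) ⟨?_, ?_, ?_⟩ ?_
  · -- MapsTo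
    rintro t ⟨ht, hh, hl⟩
    refine ⟨stair_map_sub _ ht ?_, ?_, ?_⟩
    · intro i hi a ha
      have := key t ht hh i hi a ha
      omega
    · rw [headD_map _ (by simp), hh]
    · rw [getLastD_map _ (by simp), hl]; rfl
  · -- InjOn
    rintro t1 ⟨ht1, hh1, _⟩ t2 ⟨ht2, hh2, _⟩ he
    have e1 := map_roundtrip (k - 1) (t := t1)
      (fun i hi a ha => by have := key t1 ht1 hh1 i hi a ha; omega)
    have e2 := map_roundtrip (k - 1) (t := t2)
      (fun i hi a ha => by have := key t2 ht2 hh2 i hi a ha; omega)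
    rw [← e1, ← e2]
    simp only at he
    rw [he]
  · -- SurjOn
    rintro t' ⟨ht', hh', hl'⟩
    refine ⟨t'.map (List.map (· + (k - 1))), ⟨stair_map_add _ ht', ?_, ?_⟩, ?_⟩
    · rw [headD_map _ (by simp), hh', hroundu]
    · rw [getLastD_map _ (by simp), hl']; rfl
    · show (t'.map (List.map (· + (k - 1)))).map (List.map (· - (k - 1))) = t'
      rw [List.map_map]
      conv_rhs => rw [← List.map_id t']
      refine List.map_congr_left ?_
      intro c hc
      simp only [Function.comp_apply, List.map_map, id]
      conv_rhs => rw [← List.map_id c]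
      refine List.map_congr_left ?_
      intro a ha
      simp only [Function.comp_apply, id]
      omega
  · -- weights
    rintro t ⟨ht, hh, _⟩
    have hge : ∀ i, i < t.length → ∀ a ∈ t.getD i [], k ≤ a := key t ht hh
    have hsub : IsStaircase (t.map (List.map (· - (k - 1)))) :=
      stair_map_sub _ ht (fun i hi a ha => by have := hge i hi a ha; omega)
    have hw := stairW_map_add x y (k - 1) hsub
    have hrt := map_roundtrip (k - 1) (t := t)
      (fun i hi a ha => by have := hge i hi a ha; omega)
    rw [hrt] at hw
    exact hw
end
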